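/- Fix λ ∈ (0, λ₀). There exist a constant K₇(λ) > 0 and for each r ∈ ℕ a threshold S(λ,r) ∈ ℕ, depending only on d, M₀, M₁, λ (and r), such that whenever the pair (m₁,m₂) is (λ,r)-good for ω, m₂ − m₁ > S(λ,r), and y ∈ ℤ^d with |y| ≤ r: Σ_{x : |x| > r} Z_{m₁,m₂}(x,y) ≤ K₇(λ)·e^{−2λ₀ r}·Z_{m₁,m₂}(0,y). -/

import Mathlib

open MeasureTheory Filter

namespace BKpaper

abbrev X (d : ℕ) := Fin d → ℤ

/-- the max-norm |x| = max_i |x_i|, as a natural number -/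
def nm {d : ℕ} (x : X d) : ℕ := Finset.univ.sup fun i => (x i).natAbs

/-- spin value of a boolean: `true ↦ 1`, `false ↦ -1` -/
def sgn (b : Bool) : ℝ := if b then 1 else -1

/-- ξ_m(ω) = M₀ if ω_m = 1, ξ_m(ω) = −M₁ if ω_m = −1 -/
def xi (M₀ M₁ : ℝ) (ω : ℤ → Bool) (m : ℤ) : ℝ := if ω m then M₀ else -M₁

/-- one admissible step of the lazy random walk -/
def stepOK {d : ℕ} (x y : X d) : Prop := (∑ i, (y i - x i).natAbs) ≤ 1

/-- admissible path on the (discrete) interval [n₁, n₂] -/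
def Adm {d : ℕ} (n₁ n₂ : ℤ) (γ : ℤ → X d) : Prop :=
  ∀ n : ℤ, n₁ ≤ n → n < n₂ → stepOK (γ n) (γ (n + 1))

/-- a path frozen outside [n₁,n₂]; used to represent a path on [n₁,n₂] by a
function on all of ℤ -/
def Frozen {d : ℕ} (n₁ n₂ : ℤ) (γ : ℤ → X d) : Prop :=
  (∀ n : ℤ, n ≤ n₁ → γ n = γ n₁) ∧ (∀ n : ℤ, n₂ ≤ n → γ n = γ n₂)

/-- Φ_{n₁,n₂}(γ,ω) = Σ_{n=n₁+1}^{n₂} V(γ(n)) ω_n -/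
noncomputable def Phi {d : ℕ} (V : X d → ℝ) (ω : ℤ → Bool) (n₁ n₂ : ℤ) (γ : ℤ → X d) : ℝ :=
  ∑ n ∈ Finset.Icc (n₁ + 1) n₂, V (γ n) * sgn (ω n)

/-- the Feynman–Kac operator T^{n₁,n₂}(ω) -/
noncomputable def T {d : ℕ} (V : X d → ℝ) (ω : ℤ → Bool) (n₁ n₂ : ℤ)
    (u : X d → ℝ) (x : X d) : ℝ :=
  ((2 * (d : ℝ) + 1) ^ (n₂ - n₁))⁻¹ *
    ∑' γ : {γ : ℤ → X d // Adm n₁ n₂ γ ∧ Frozen n₁ n₂ γ ∧ γ n₂ = x},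
      Real.exp (Phi V ω n₁ n₂ γ.1) * u (γ.1 n₁)

/-- the partition function Z_{n₁,n₂}(x₁,x₂) -/
noncomputable def Z {d : ℕ} (V : X d → ℝ) (ω : ℤ → Bool) (n₁ n₂ : ℤ) (x₁ x₂ : X d) : ℝ :=
  ∑' γ : {γ : ℤ → X d // Adm n₁ n₂ γ ∧ Frozen n₁ n₂ γ ∧ γ n₁ = x₁ ∧ γ n₂ = x₂},
    Real.exp (Phi V ω n₁ n₂ γ.1)

/-- the class F(c): nonnegative bounded functions with sup φ ≤ c·φ(0) -/
def Fset (d : ℕ) (c : ℝ) : Set (X d → ℝ) :=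
  {φ | (∀ x, 0 ≤ φ x) ∧ ∀ x, φ x ≤ c * φ 0}

/-- P is the i.i.d. Bernoulli(1/2) product measure on {−1,1}^ℤ ≃ ℤ → Bool -/
def IsBernoulli (P : Measure (ℤ → Bool)) : Prop :=
  IsProbabilityMeasure P ∧ ∀ (s : Finset ℤ) (f : ℤ → Bool),
    P {ω | ∀ i ∈ s, ω i = f i} = (1 / 2 : ENNReal) ^ s.card

/-- the shift θ^k -/
def shift (k : ℤ) (ω : ℤ → Bool) : ℤ → Bool := fun n => ω (k + n)

/-- first standard basis vector e₁ of ℤ^d -/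
def e1 (d : ℕ) : X d := fun i => if (i : ℕ) = 0 then 1 else 0

/-- the optimal path γ*: γ*_n = 0 if ω_n = 1, γ*_n = e₁ if ω_n = −1 -/
def gstar (d : ℕ) (ω : ℤ → Bool) : ℤ → X d := fun n => if ω n then 0 else e1 d

/-- the pair (m₁,m₂) is (λ,r)-good for ω -/
def Good (d : ℕ) (M₀ M₁ lam : ℝ) (r : ℕ) (m₁ m₂ : ℤ) (ω : ℤ → Bool) : Prop :=
  m₁ < m₂ ∧
  (∀ j : ℤ, m₁ + 1 ≤ j → j ≤ m₁ + r → ω j = true) ∧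
  (∀ k : ℕ, 1 ≤ k →
    (k : ℝ) * (M₁ + lam + Real.log (2 * (d : ℝ) + 1)) <
      ∑ j ∈ Finset.Icc (m₁ + r + 1) (m₁ + r + k), xi M₀ M₁ ω j) ∧
  (∀ j : ℤ, m₂ - r + 1 ≤ j → j ≤ m₂ → ω j = true) ∧
  (∀ k : ℕ, 1 ≤ k →
    (k : ℝ) * (M₁ + lam + Real.log (2 * (d : ℝ) + 1)) <
      ∑ j ∈ Finset.Icc (m₂ - r - k + 1) (m₂ - r), xi M₀ M₁ ω j)

/-- the ball B_r ⊆ ℤ^d as a finite set -/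
noncomputable def ball (d r : ℕ) : Finset (X d) := Fintype.piFinset fun _ => Finset.Icc (-(r : ℤ)) (r : ℤ)

lemma ball_nonempty (d r : ℕ) : (ball d r).Nonempty :=
  ⟨fun _ => 0, by simp [ball, Fintype.mem_piFinset]⟩

/-- the Hilbert projective (pseudo)metric ρ_r on functions restricted to B_r -/
noncomputable def rho (d r : ℕ) (φ ψ : X d → ℝ) : ℝ :=
  Real.log ((ball d r).sup' (ball_nonempty d r) (fun x => φ x / ψ x) *
            (ball d r).sup' (ball_nonempty d r) (fun x => ψ x / φ x))

/-- diam_r of a set of functions w.r.t. ρ_r -/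
noncomputable def diamr (d r : ℕ) (A : Set (X d → ℝ)) : ℝ :=
  sSup {y | ∃ φ ∈ A, ∃ ψ ∈ A, y = rho d r φ ψ}

/-- the set G(λ,r) (with K₁ explicit): φ ∈ F(2K₁) with sup_{|x|>r} φ ≤ sup_{|x|≤r} φ -/
def Gset (d : ℕ) (K₁ : ℝ) (r : ℕ) : Set (X d → ℝ) :=
  {φ | φ ∈ Fset d (2 * K₁) ∧ ∀ x, r < nm x → ∃ z, nm z ≤ r ∧ φ x ≤ φ z}

/-- the set H(λ,r) (with K₁, K₂ explicit) -/
def Hset (d : ℕ) (K₁ K₂ : ℝ) (r : ℕ) : Set (X d → ℝ) :=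
  {φ | φ ∈ Gset d K₁ r ∧ (⨆ x, φ x) = 1 ∧ ∀ y, nm y ≤ r → 1 / K₂ ≤ φ y}

/-- finite-volume Gibbs measure on [n₁,n₂] for ω (paths represented as
functions ℤ → ℤ^d frozen outside [n₁,n₂]) -/
def FVGibbs (d : ℕ) (V : X d → ℝ) (ω : ℤ → Bool) (n₁ n₂ : ℤ)
    (μ : Measure (ℤ → X d)) : Prop :=
  IsProbabilityMeasure μ ∧
  μ {γ | Adm n₁ n₂ γ ∧ Frozen n₁ n₂ γ} = 1 ∧
  ∀ γ : ℤ → X d, Adm n₁ n₂ γ →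
    μ {α | α n₁ = γ n₁ ∧ α n₂ = γ n₂} ≠ 0 →
    μ {α | ∀ n : ℤ, n₁ ≤ n → n ≤ n₂ → α n = γ n} =
      ENNReal.ofReal (Real.exp (Phi V ω n₁ n₂ γ) / Z V ω n₁ n₂ (γ n₁) (γ n₂)) *
        μ {α | α n₁ = γ n₁ ∧ α n₂ = γ n₂}

/-- (infinite-volume) Gibbs measure for ω -/
def GibbsMeasure (d : ℕ) (V : X d → ℝ) (ω : ℤ → Bool) (μ : Measure (ℤ → X d)) : Prop :=
  IsProbabilityMeasure μ ∧
  μ {α | ∀ n : ℤ, stepOK (α n) (α (n + 1))} = 1 ∧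
  ∀ n₁ n₂ : ℤ, n₁ < n₂ → ∀ γ : ℤ → X d, Adm n₁ n₂ γ →
    μ {α | α n₁ = γ n₁ ∧ α n₂ = γ n₂} ≠ 0 →
    μ {α | ∀ n : ℤ, n₁ ≤ n → n ≤ n₂ → α n = γ n} =
      ENNReal.ofReal (Real.exp (Phi V ω n₁ n₂ γ) / Z V ω n₁ n₂ (γ n₁) (γ n₂)) *
        μ {α | α n₁ = γ n₁ ∧ α n₂ = γ n₂}

/-- the weak localization condition for a measure on two-sided paths -/
def WeakLoc (d : ℕ) (μ : Measure (ℤ → X d)) : Prop :=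
  ∀ ε : ℝ, 0 < ε → ∃ r : ℕ,
    Filter.liminf (fun n : ℤ => μ {α | r < nm (α n)}) Filter.atTop < ENNReal.ofReal ε ∧
    Filter.liminf (fun n : ℤ => μ {α | r < nm (α n)}) Filter.atBot < ENNReal.ofReal ε

/-- normalized positive eigenfunction of the cocycle T -/
def IsEigen (d : ℕ) (V : X d → ℝ) (P : Measure (ℤ → Bool))
    (u : (ℤ → Bool) → X d → ℝ) : Prop :=
  (∀ x : X d, Measurable fun ω => u ω x) ∧
  ∀ᵐ ω ∂P, (∀ x, 0 < u ω x) ∧ BddAbove (Set.range (u ω)) ∧ (⨆ x, u ω x) = 1 ∧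
    ∃ κ : ℝ, 0 < κ ∧ ∀ x, T V ω 0 1 (u ω) x = κ * u (shift 1 ω) x


/-! ### auxiliary: l1 norm -/

def l1 {d : ℕ} (v : X d) : ℕ := ∑ i, (v i).natAbs

lemma l1_zero {d : ℕ} : l1 (0 : X d) = 0 := by simp [l1]

lemma eq_zero_of_l1 {d : ℕ} {v : X d} (h : l1 v = 0) : v = 0 := by
  funext i
  have := (Finset.sum_eq_zero_iff).mp h i (Finset.mem_univ i)
  simpa [Int.natAbs_eq_zero] using this

lemma l1_add_le {d : ℕ} (u v : X d) : l1 (u + v) ≤ l1 u + l1 v := by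
  classical
  unfold l1
  rw [← Finset.sum_add_distrib]
  exact Finset.sum_le_sum fun i _ => Int.natAbs_add_le _ _

lemma l1_sub_triangle {d : ℕ} (u v w : X d) : l1 (u - w) ≤ l1 (u - v) + l1 (v - w) := by
  have h : u - w = (u - v) + (v - w) := by abel
  rw [h]; exact l1_add_le _ _

lemma l1_neg {d : ℕ} (v : X d) : l1 (-v) = l1 v := by
  unfold l1; apply Finset.sum_congr rfl; intro i _; simp

lemma l1_sub_comm {d : ℕ} (u v : X d) : l1 (u - v) = l1 (v - u) := by
  rw [← l1_neg (v - u)]; congr 1; abel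

lemma nm_le_l1 {d : ℕ} (v : X d) : nm v ≤ l1 v := by
  apply Finset.sup_le
  intro i _
  exact Finset.single_le_sum (f := fun j => (v j).natAbs)
    (fun j _ => Nat.zero_le _) (Finset.mem_univ i)

lemma l1_le_d_mul_nm {d : ℕ} (v : X d) : l1 v ≤ d * nm v := by
  calc l1 v ≤ (Finset.univ : Finset (Fin d)).card • nm v :=
        Finset.sum_le_card_nsmul _ _ _ fun i _ =>
          Finset.le_sup (f := fun j => (v j).natAbs) (Finset.mem_univ i)
    _ = d * nm v := by simp [Finset.card_univ, smul_eq_mul]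

lemma stepOK_iff {d : ℕ} (x y : X d) : stepOK x y ↔ l1 (y - x) ≤ 1 := Iff.rfl

lemma ne_zero_of_l1_pos {d : ℕ} {v : X d} (h : 0 < l1 v) : v ≠ 0 := by
  intro hv; rw [hv, l1_zero] at h; exact absurd h (lt_irrefl 0)

/-! ### path displacement -/

lemma adm_displ {d : ℕ} {n₁ n₂ : ℤ} {γ : ℤ → X d} (h : Adm n₁ n₂ γ) :
    ∀ k : ℕ, ∀ a : ℤ, n₁ ≤ a → a + k ≤ n₂ → l1 (γ (a + k) - γ a) ≤ k := by
  intro k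
  induction k with
  | zero => intro a _ _; simp [l1_zero]
  | succ k ih =>
    intro a ha hak
    have ha1 : a < n₂ := by omega
    have hst := h a ha ha1
    have h2 : l1 (γ (a + 1) - γ a) ≤ 1 := (stepOK_iff _ _).mp hst
    have h3 : l1 (γ (a + 1 + k) - γ (a + 1)) ≤ k := ih (a + 1) (by omega) (by omega)
    have : l1 (γ (a + (k+1:ℕ)) - γ a) ≤ l1 (γ (a + 1 + k) - γ (a + 1)) + l1 (γ (a+1) - γ a) := by
      have he : a + ((k:ℤ) + 1) = a + 1 + k := by ring
      calc l1 (γ (a + (k+1:ℕ)) - γ a) = l1 (γ (a + 1 + k) - γ a) := by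
            push_cast; rw [he]
        _ ≤ _ := l1_sub_triangle _ _ _
    omega

/-! ### step coding -/

abbrev Step (d : ℕ) := Option (Fin d × Bool)

open Classical in
noncomputable def enc {d : ℕ} (v : X d) : Step d :=
  if h : ∃ i, v i ≠ 0 then some (h.choose, decide (0 < v h.choose)) else none

def dec {d : ℕ} : Step d → X d
  | none => 0
  | some (i, b) => fun j => if j = i then (if b then 1 else -1) else 0

lemma dec_enc {d : ℕ} {v : X d} (hv : l1 v ≤ 1) : dec (enc v) = v := by
  classical
  unfold enc
  by_cases h : ∃ i, v i ≠ 0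
  · rw [dif_pos h]
    have hvi : v h.choose ≠ 0 := h.choose_spec
    have h1 : 1 ≤ (v h.choose).natAbs := by
      rcases Nat.eq_zero_or_pos (v h.choose).natAbs with h0 | h0
      · exact absurd (Int.natAbs_eq_zero.mp h0) hvi
      · exact h0
    have hle : (v h.choose).natAbs ≤ l1 v :=
      Finset.single_le_sum (f := fun j => (v j).natAbs)
        (fun j _ => Nat.zero_le _) (Finset.mem_univ _)
    have h2 : (v h.choose).natAbs = 1 := by omega
    have h3 : ∀ j, j ≠ h.choose → v j = 0 := by
      intro j hj
      by_contra hvj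
      have hj1 : 1 ≤ (v j).natAbs := by
        rcases Nat.eq_zero_or_pos (v j).natAbs with h0 | h0
        · exact absurd (Int.natAbs_eq_zero.mp h0) hvj
        · exact h0
      have hss : (∑ k ∈ ({h.choose, j} : Finset (Fin d)), (v k).natAbs) ≤ l1 v :=
        Finset.sum_le_sum_of_subset (Finset.subset_univ _)
      rw [Finset.sum_pair (Ne.symm hj)] at hss
      omega
    rcases Int.natAbs_eq_iff.mp h2 with hv1 | hv1
    · funext j
      by_cases hji : j = h.choose
      · subst hji
        simp [dec, hv1]
      · simp [dec, hji, h3 j hji]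
    · funext j
      by_cases hji : j = h.choose
      · subst hji
        have hneg : ¬ (0 < v h.choose) := by rw [hv1]; norm_num
        simp [dec, hv1, hneg]
      · simp [dec, hji, h3 j hji]
  · rw [dif_neg h]
    push_neg at h
    funext j
    simp [dec, h j]

/-! ### split of Ioc sums over ℤ -/

lemma sum_Ioc_split (f : ℤ → ℝ) {a b c : ℤ} (h₁ : a ≤ b) (h₂ : b ≤ c) :
    ∑ n ∈ Finset.Ioc a c, f n = ∑ n ∈ Finset.Ioc a b, f n + ∑ n ∈ Finset.Ioc b c, f n := by
  rw [← Finset.sum_union]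
  · rw [Finset.Ioc_union_Ioc_eq_Ioc h₁ h₂]
  · rw [Finset.disjoint_left]
    intro n hn hn'
    simp only [Finset.mem_Ioc] at hn hn'
    omega

lemma Icc_one (a b : ℤ) : Finset.Icc (a+1) b = Finset.Ioc a b := by
  ext n; simp [Int.add_one_le_iff]

lemma Phi_Ioc {d : ℕ} (V : X d → ℝ) (ω : ℤ → Bool) (n₁ n₂ : ℤ) (γ : ℤ → X d) :
    Phi V ω n₁ n₂ γ = ∑ n ∈ Finset.Ioc n₁ n₂, V (γ n) * sgn (ω n) := by
  unfold Phi; rw [Icc_one]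

/-! ### finiteness of path spaces -/

lemma nm_le_of_l1 {d : ℕ} (u w : X d) : nm u ≤ nm w + l1 (u - w) := by
  apply Finset.sup_le
  intro i _
  have h1 : (u i).natAbs ≤ (w i).natAbs + ((u - w) i).natAbs := by
    have h : u i = w i + (u - w) i := by simp
    rw [h]; exact Int.natAbs_add_le _ _
  have h2 : (w i).natAbs ≤ nm w :=
    Finset.le_sup (f := fun j => (w j).natAbs) (Finset.mem_univ i)
  have h3 : ((u - w) i).natAbs ≤ l1 (u - w) :=
    Finset.single_le_sum (f := fun j => ((u - w) j).natAbs)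
      (fun j _ => Nat.zero_le _) (Finset.mem_univ i)
  omega

lemma pathType_finite {d : ℕ} (n₁ n₂ : ℤ) (a b : X d) :
    Finite {γ : ℤ → X d // Adm n₁ n₂ γ ∧ Frozen n₁ n₂ γ ∧ γ n₁ = a ∧ γ n₂ = b} := by
  classical
  set R : ℕ := nm a + (n₂ - n₁).toNat with hR
  have hCfin : Finite {v : X d // nm v ≤ R} := by
    apply Finite.of_injective
      (β := Fin d → {z : ℤ // z ∈ Finset.Icc (-(R:ℤ)) (R:ℤ)})
      (fun v i => ⟨v.1 i, by
        have h1 : (v.1 i).natAbs ≤ R :=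
          le_trans (Finset.le_sup (f := fun j => (v.1 j).natAbs) (Finset.mem_univ i)) v.2
        simp only [Finset.mem_Icc]; omega⟩)
    intro u v huv
    apply Subtype.ext; funext i
    exact congrArg Subtype.val (congrFun huv i)
  apply Finite.of_injective
    (β := {n : ℤ // n ∈ Finset.Icc n₁ n₂} → {v : X d // nm v ≤ R})
    (fun γ n => ⟨γ.1 n.1, by
      obtain ⟨hA, hF, h1, h2⟩ := γ.2
      have hm := Finset.mem_Icc.mp n.2
      have hd1 : l1 (γ.1 n.1 - γ.1 n₁) ≤ (n.1 - n₁).toNat := by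
        have h := adm_displ hA (n.1 - n₁).toNat n₁ le_rfl
          (by rw [Int.toNat_of_nonneg (by omega)]; omega)
        rw [Int.toNat_of_nonneg (by omega)] at h
        have he : n₁ + (n.1 - n₁) = n.1 := by omega
        rwa [he] at h
      have := nm_le_of_l1 (γ.1 n.1) (γ.1 n₁)
      rw [h1] at this
      have htn : (n.1 - n₁).toNat ≤ (n₂ - n₁).toNat := by omega
      rw [h1] at hd1
      omega⟩)
  intro γ δ hγδ
  apply Subtype.ext; funext n
  obtain ⟨hAγ, hFγ, hγ1, hγ2⟩ := γ.2
  obtain ⟨hAδ, hFδ, hδ1, hδ2⟩ := δ.2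
  rcases le_or_gt n n₁ with h | h
  · rw [hFγ.1 n h, hFδ.1 n h, hγ1, hδ1]
  rcases le_or_gt n₂ n with h' | h'
  · rw [hFγ.2 n h', hFδ.2 n h', hγ2, hδ2]
  · have hmem : n ∈ Finset.Icc n₁ n₂ := Finset.mem_Icc.mpr ⟨le_of_lt h, le_of_lt h'⟩
    exact congrArg Subtype.val (congrFun hγδ ⟨n, hmem⟩)

/-! ### the ENNReal partition function -/

noncomputable def Zenn {d : ℕ} (V : X d → ℝ) (ω : ℤ → Bool) (n₁ n₂ : ℤ) (x₁ x₂ : X d) :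
    ENNReal :=
  ∑' γ : {γ : ℤ → X d // Adm n₁ n₂ γ ∧ Frozen n₁ n₂ γ ∧ γ n₁ = x₁ ∧ γ n₂ = x₂},
    ENNReal.ofReal (Real.exp (Phi V ω n₁ n₂ γ.1))

lemma Zenn_eq {d : ℕ} (V : X d → ℝ) (ω : ℤ → Bool) (n₁ n₂ : ℤ) (x₁ x₂ : X d) :
    Zenn V ω n₁ n₂ x₁ x₂ = ENNReal.ofReal (Z V ω n₁ n₂ x₁ x₂) := by
  have : Finite {γ : ℤ → X d // Adm n₁ n₂ γ ∧ Frozen n₁ n₂ γ ∧ γ n₁ = x₁ ∧ γ n₂ = x₂} :=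
    pathType_finite n₁ n₂ x₁ x₂
  rw [Zenn, Z, ENNReal.ofReal_tsum_of_nonneg (fun γ => (Real.exp_pos _).le) Summable.of_finite]

/-! ### gstar basics -/

lemma e1_apply_zero {d : ℕ} (hd : 1 ≤ d) : e1 d ⟨0, hd⟩ = 1 := by simp [e1]

lemma e1_ne_zero {d : ℕ} (hd : 1 ≤ d) : e1 d ≠ 0 := by
  intro h
  have := congrFun h ⟨0, hd⟩
  rw [e1_apply_zero hd] at this
  simp at this

lemma l1_e1 {d : ℕ} : l1 (e1 d) ≤ 1 := by
  unfold l1 e1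
  classical
  calc (∑ i : Fin d, ((if (i : ℕ) = 0 then (1:ℤ) else 0)).natAbs)
      = ∑ i : Fin d, (if (i : ℕ) = 0 then 1 else 0) := by
        apply Finset.sum_congr rfl; intro i _
        by_cases h : (i : ℕ) = 0 <;> simp [h]
    _ ≤ 1 := by
        rcases Nat.eq_zero_or_pos d with hd | hd
        · subst hd; simp
        · rw [Finset.sum_eq_single ⟨0, hd⟩]
          · simp
          · intro j _ hj
            rw [if_neg]
            intro hc
            exact hj (Fin.ext hc)
          · intro h; exact absurd (Finset.mem_univ _) h

lemma gstar_mem {d : ℕ} (ω : ℤ → Bool) (n : ℤ) : gstar d ω n = 0 ∨ gstar d ω n = e1 d := by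
  unfold gstar; split
  · exact Or.inl rfl
  · exact Or.inr rfl

lemma l1_step_e1 {d : ℕ} {u v : X d} (hu : u = 0 ∨ u = e1 d) (hv : v = 0 ∨ v = e1 d) :
    l1 (v - u) ≤ 1 := by
  rcases hu with hu | hu <;> rcases hv with hv | hv <;> subst hu <;> subst hv
  · rw [sub_zero, l1_zero]; omega
  · rw [sub_zero]; exact l1_e1
  · rw [zero_sub, l1_neg]; exact l1_e1
  · rw [sub_self, l1_zero]; omega

/-! ### per-step energy bounds -/

section energy
variable {d : ℕ} {V : X d → ℝ} {ω : ℤ → Bool} {M₀ M₁ : ℝ}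

lemma term_le (hV0 : V 0 = M₀) (hV1 : ∀ x : X d, x ≠ 0 → |V x| ≤ M₁)
    (hM₀ : 0 ≤ M₀) (hM₁ : 0 ≤ M₁) {v : X d} {n : ℤ}
    (hv : ω n = true → v ≠ 0) : V v * sgn (ω n) ≤ M₁ := by
  cases hω : ω n with
  | true =>
    have hvne := hv hω
    rw [sgn, if_pos rfl, mul_one]
    exact le_trans (le_abs_self _) (hV1 v hvne)
  | false =>
    rw [sgn, if_neg (by simp), mul_neg_one]
    by_cases hvz : v = 0
    · rw [hvz, hV0]; linarith
    · have := abs_le.mp (hV1 v hvz)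
      linarith [this.1]

lemma term_ge_xi (hd : 1 ≤ d) (hV0 : V 0 = M₀) (hV1 : ∀ x : X d, x ≠ 0 → |V x| ≤ M₁)
    {n : ℤ} : xi M₀ M₁ ω n ≤ V (gstar d ω n) * sgn (ω n) := by
  cases hω : ω n with
  | true =>
    rw [xi, if_pos (by simp [hω]), sgn, if_pos rfl, mul_one, gstar, if_pos (by simp [hω]), hV0]
  | false =>
    rw [xi, if_neg (by simp [hω]), sgn, if_neg (by simp [hω]), mul_neg_one,
      gstar, if_neg (by simp [hω])]
    have := abs_le.mp (hV1 (e1 d) (e1_ne_zero hd))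
    linarith [this.2]

lemma term_ge_generic (hV0 : V 0 = M₀) (hV1 : ∀ x : X d, x ≠ 0 → |V x| ≤ M₁)
    (hM₀ : 0 ≤ M₀) (hM₁ : 0 ≤ M₁) (v : X d) {n : ℤ} :
    xi M₀ M₁ ω n - (M₀ + M₁) ≤ V v * sgn (ω n) := by
  cases hω : ω n with
  | true =>
    rw [xi, if_pos (by simp [hω]), sgn, if_pos rfl, mul_one]
    by_cases hvz : v = 0
    · rw [hvz, hV0]; linarith
    · have := abs_le.mp (hV1 v hvz)
      linarith [this.1]
  | false =>
    rw [xi, if_neg (by simp [hω]), sgn, if_neg (by simp [hω]), mul_neg_one]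
    by_cases hvz : v = 0
    · rw [hvz, hV0]; linarith
    · have := abs_le.mp (hV1 v hvz)
      linarith [this.2]

end energy

/-! ### goodness: lower bound for sums of ξ -/

lemma xi_sum_ones {d : ℕ} {M₀ M₁ lam : ℝ} {r : ℕ} {m₁ m₂ : ℤ} {ω : ℤ → Bool}
    (hG : Good d M₀ M₁ lam r m₁ m₂ ω) :
    ∑ n ∈ Finset.Ioc m₁ (m₁ + r), xi M₀ M₁ ω n = (r : ℝ) * M₀ := by
  have : ∀ n ∈ Finset.Ioc m₁ (m₁ + r), xi M₀ M₁ ω n = M₀ := by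
    intro n hn
    rw [Finset.mem_Ioc] at hn
    rw [xi, if_pos (hG.2.1 n (by omega) hn.2)]
  rw [Finset.sum_congr rfl this, Finset.sum_const, Int.card_Ioc]
  simp [nsmul_eq_mul]

lemma xi_sum_lower {d : ℕ} {M₀ M₁ lam : ℝ} {r : ℕ} {m₁ m₂ : ℤ} {ω : ℤ → Bool}
    (hG : Good d M₀ M₁ lam r m₁ m₂ ω) (j : ℕ) :
    (r : ℝ) * M₀ + (j : ℝ) * (M₁ + lam + Real.log (2 * (d : ℝ) + 1)) ≤
      ∑ n ∈ Finset.Ioc m₁ (m₁ + r + j), xi M₀ M₁ ω n := by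
  rw [sum_Ioc_split _ (by omega : m₁ ≤ m₁ + (r:ℤ)) (by omega : m₁ + (r:ℤ) ≤ m₁ + r + j)]
  rw [xi_sum_ones hG]
  rcases Nat.eq_zero_or_pos j with hj | hj
  · subst hj; simp
  · have := hG.2.2.1 j hj
    rw [Icc_one] at this
    have hle : (j:ℝ) * (M₁ + lam + Real.log (2 * (d : ℝ) + 1)) ≤
        ∑ n ∈ Finset.Ioc (m₁ + r) (m₁ + r + j), xi M₀ M₁ ω n := le_of_lt this
    linarith

/-! ### the straight path from 0 to y -/

def acc {d : ℕ} (y : X d) (i : Fin d) : ℕ := ∑ j ∈ Finset.Iio i, (y j).natAbs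

noncomputable def pos {d : ℕ} (y : X d) (k : ℕ) : X d :=
  fun i => (y i).sign * ↑(min (y i).natAbs (k - acc y i))

lemma acc_add_le {d : ℕ} (y : X d) (i : Fin d) : acc y i + (y i).natAbs ≤ l1 y := by
  unfold acc l1
  have h : (Finset.Iio i).sum (fun j => (y j).natAbs) + (y i).natAbs
      = ∑ j ∈ insert i (Finset.Iio i), (y j).natAbs := by
    rw [Finset.sum_insert (by simp)]
    ring
  rw [h]
  exact Finset.sum_le_sum_of_subset (Finset.subset_univ _)

lemma acc_mono {d : ℕ} (y : X d) {i i' : Fin d} (h : i < i') :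
    acc y i + (y i).natAbs ≤ acc y i' := by
  unfold acc
  have h1 : (Finset.Iio i).sum (fun j => (y j).natAbs) + (y i).natAbs
      = ∑ j ∈ insert i (Finset.Iio i), (y j).natAbs := by
    rw [Finset.sum_insert (by simp)]; ring
  rw [h1]
  apply Finset.sum_le_sum_of_subset
  intro j hj
  simp only [Finset.mem_insert, Finset.mem_Iio] at hj ⊢
  rcases hj with hj | hj
  · omega
  · omega

lemma pos_zero {d : ℕ} (y : X d) : pos y 0 = 0 := by
  funext i
  simp [pos]

lemma pos_sat {d : ℕ} (y : X d) {k : ℕ} (hk : l1 y ≤ k) : pos y k = y := by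
  funext i
  have h := acc_add_le y i
  have : min (y i).natAbs (k - acc y i) = (y i).natAbs := by omega
  rw [pos, this]
  exact Int.sign_mul_natAbs _

lemma pos_step {d : ℕ} (y : X d) (k : ℕ) : l1 (pos y (k+1) - pos y k) ≤ 1 := by
  classical
  set f : Fin d → ℕ := fun i => ((pos y (k+1) - pos y k) i).natAbs with hf
  have hdiff : ∀ i, f i = min (y i).natAbs ((k+1) - acc y i) - min (y i).natAbs (k - acc y i) := by
    intro i
    by_cases hyi : y i = 0
    · have : f i = 0 := by
        rw [hf]
        simp [pos, hyi]
      rw [this, hyi]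
      simp
    · have hle : min (y i).natAbs (k - acc y i) ≤ min (y i).natAbs ((k+1) - acc y i) := by omega
      have hrepr : (pos y (k+1) - pos y k) i = (y i).sign *
          ((min (y i).natAbs ((k+1) - acc y i) - min (y i).natAbs (k - acc y i) : ℕ) : ℤ) := by
        simp only [Pi.sub_apply, pos]
        rw [Int.ofNat_sub hle]
        ring
      rw [hf]
      simp only [hrepr, Int.natAbs_mul, Int.natAbs_natCast]
      rw [Int.natAbs_sign_of_ne_zero hyi, one_mul]
  have hzero : ∀ i, ¬ (acc y i ≤ k ∧ k < acc y i + (y i).natAbs) → f i = 0 := by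
    intro i hi
    rw [hdiff i]
    omega
  have hone : ∀ i, f i ≤ 1 := by
    intro i; rw [hdiff i]; omega
  by_cases hex : ∃ i, f i ≠ 0
  · obtain ⟨i₀, hi₀⟩ := hex
    have hi₀' : acc y i₀ ≤ k ∧ k < acc y i₀ + (y i₀).natAbs := by
      by_contra hc
      exact hi₀ (hzero i₀ hc)
    have huniq : ∀ j, j ≠ i₀ → f j = 0 := by
      intro j hj
      apply hzero
      intro hcj
      rcases lt_trichotomy j i₀ with h | h | h
      · have := acc_mono y h
        omega
      · exact hj h
      · have := acc_mono y h
        omega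
    have hsum : l1 (pos y (k+1) - pos y k) = f i₀ := by
      unfold l1
      rw [Finset.sum_eq_single i₀]
      · intro j _ hj; exact huniq j hj
      · intro h; exact absurd (Finset.mem_univ _) h
    rw [hsum]
    exact hone i₀
  · push_neg at hex
    have hsum : l1 (pos y (k+1) - pos y k) = 0 := by
      unfold l1
      exact Finset.sum_eq_zero fun i _ => hex i
    omega

lemma pos_ne_zero {d : ℕ} {y : X d} (hy : y ≠ 0) {k : ℕ} (hk : 1 ≤ k) : pos y k ≠ 0 := by
  classical
  have hex : ∃ i, y i ≠ 0 := by
    by_contra hc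
    push_neg at hc
    exact hy (funext fun i => hc i)
  set s := Finset.univ.filter (fun i => y i ≠ 0) with hs
  have hne : s.Nonempty := by
    obtain ⟨i, hi⟩ := hex
    exact ⟨i, by simp [hs, hi]⟩
  set i₀ := s.min' hne with hi₀
  have hyi₀ : y i₀ ≠ 0 := by
    have := s.min'_mem hne
    rw [← hi₀] at this
    simpa [hs] using this
  have hacc : acc y i₀ = 0 := by
    unfold acc
    apply Finset.sum_eq_zero
    intro j hj
    rw [Finset.mem_Iio] at hj
    by_contra hzj
    have hjs : j ∈ s := by simp [hs, Int.natAbs_eq_zero]; exact fun hc => hzj (by simp [hc])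
    have := s.min'_le j hjs
    rw [← hi₀] at this
    omega
  intro hc
  have := congrFun hc i₀
  rw [pos, hacc] at this
  simp only [Pi.zero_apply] at this
  rcases mul_eq_zero.mp this with h | h
  · exact hyi₀ (Int.sign_eq_zero_iff_zero.mp h)
  · have h1 : 1 ≤ (y i₀).natAbs := by
      rcases Nat.eq_zero_or_pos (y i₀).natAbs with h0 | h0
      · exact absurd (Int.natAbs_eq_zero.mp h0) hyi₀
      · exact h0
    have : min (y i₀).natAbs (k - 0) = 0 := by exact_mod_cast h
    omega

/-! ### the reference path γ⁰ : gstar, then walk out to y -/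

noncomputable def refFun {d : ℕ} (ω : ℤ → Bool) (m₁ ν : ℤ) (y : X d) : ℤ → X d :=
  fun n => if n ≤ m₁ then 0 else if n < ν then gstar d ω n else pos y (n - ν).toNat

lemma refFun_zero {d : ℕ} (ω : ℤ → Bool) (m₁ ν : ℤ) (y : X d) {n : ℤ} (h : n ≤ m₁) :
    refFun ω m₁ ν y n = 0 := by rw [refFun, if_pos h]

lemma refFun_gstar {d : ℕ} (ω : ℤ → Bool) (m₁ ν : ℤ) (y : X d) {n : ℤ}
    (h1 : m₁ < n) (h2 : n < ν) : refFun ω m₁ ν y n = gstar d ω n := by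
  rw [refFun, if_neg (by omega), if_pos h2]

lemma refFun_pos {d : ℕ} (ω : ℤ → Bool) (m₁ ν : ℤ) (y : X d) {n : ℤ}
    (h1 : m₁ < n) (h2 : ν ≤ n) : refFun ω m₁ ν y n = pos y (n - ν).toNat := by
  rw [refFun, if_neg (by omega), if_neg (by omega)]

lemma refFun_spec {d : ℕ} (ω : ℤ → Bool) (m₁ m₂ : ℤ) (y : X d)
    (hν₁ : m₁ + 1 ≤ m₂ - (l1 y : ℤ)) :
    Adm m₁ m₂ (refFun ω m₁ (m₂ - (l1 y : ℤ)) y) ∧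
    Frozen m₁ m₂ (refFun ω m₁ (m₂ - (l1 y : ℤ)) y) ∧
    refFun ω m₁ (m₂ - (l1 y : ℤ)) y m₁ = 0 ∧
    refFun ω m₁ (m₂ - (l1 y : ℤ)) y m₂ = y := by
  set ν := m₂ - (l1 y : ℤ) with hν
  have hνm₂ : ν ≤ m₂ := by omega
  have hval : ∀ n, m₂ ≤ n → refFun ω m₁ ν y n = y := by
    intro n hn
    rw [refFun_pos ω m₁ ν y (by omega) (by omega)]
    apply pos_sat
    omega
  refine ⟨?_, ⟨?_, ?_⟩, ?_, ?_⟩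
  · -- Adm
    intro n hn hn2
    rw [stepOK_iff]
    rcases eq_or_lt_of_le hn with he | hlt
    · -- n = m₁
      rw [← he, refFun_zero ω m₁ ν y le_rfl, sub_zero]
      rcases lt_or_ge (m₁ + 1) ν with h | h
      · rw [refFun_gstar ω m₁ ν y (by omega) h]
        rcases gstar_mem (d := d) ω (m₁ + 1) with hg | hg <;> rw [hg]
        · rw [l1_zero]; omega
        · exact l1_e1
      · have he2 : ν = m₁ + 1 := by omega
        rw [refFun_pos ω m₁ ν y (by omega) (by omega), he2]
        have h3 : (m₁ + 1 - (m₁ + 1)).toNat = 0 := by simp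
        rw [h3, pos_zero, l1_zero]
        omega
    · -- m₁ < n
      rcases lt_or_ge (n+1) ν with h | h
      · rw [refFun_gstar ω m₁ ν y (by omega) h, refFun_gstar ω m₁ ν y hlt (by omega)]
        exact l1_step_e1 (gstar_mem ω n) (gstar_mem ω _)
      · rcases lt_or_ge n ν with h2 | h2
        · rw [refFun_pos ω m₁ ν y (by omega) (by omega),
            refFun_gstar ω m₁ ν y hlt h2]
          have h3 : (n + 1 - ν).toNat = 0 := by omega
          rw [h3, pos_zero, zero_sub, l1_neg]
          rcases gstar_mem (d := d) ω n with hg | hg <;> rw [hg]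
          · rw [l1_zero]; omega
          · exact l1_e1
        · rw [refFun_pos ω m₁ ν y (by omega) (by omega),
            refFun_pos ω m₁ ν y hlt h2]
          have h3 : (n + 1 - ν).toNat = (n - ν).toNat + 1 := by omega
          rw [h3]
          exact pos_step y _
  · intro n hn
    rw [refFun_zero ω m₁ ν y hn, refFun_zero ω m₁ ν y le_rfl]
  · intro n hn
    rw [hval n hn, hval m₂ le_rfl]
  · exact refFun_zero ω m₁ ν y le_rfl
  · exact hval m₂ le_rfl

lemma refFun_energy {d : ℕ} {V : X d → ℝ} {ω : ℤ → Bool} {M₀ M₁ : ℝ} (hd : 1 ≤ d)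
    (hV0 : V 0 = M₀) (hV1 : ∀ x : X d, x ≠ 0 → |V x| ≤ M₁)
    (hM₀ : 0 ≤ M₀) (hM₁ : 0 ≤ M₁) (m₁ m₂ : ℤ) (y : X d)
    (hν₁ : m₁ + 1 ≤ m₂ - (l1 y : ℤ)) :
    (∑ n ∈ Finset.Ioc m₁ m₂, xi M₀ M₁ ω n) - (M₀ + M₁) * ((l1 y : ℝ) + 1) ≤
      Phi V ω m₁ m₂ (refFun ω m₁ (m₂ - (l1 y : ℤ)) y) := by
  set ν := m₂ - (l1 y : ℤ) with hν
  rw [Phi_Ioc]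
  rw [sum_Ioc_split (f := fun n => V (refFun ω m₁ ν y n) * sgn (ω n))
    (by omega : m₁ ≤ ν - 1) (by omega : ν - 1 ≤ m₂),
    sum_Ioc_split (f := fun n => xi M₀ M₁ ω n)
    (by omega : m₁ ≤ ν - 1) (by omega : ν - 1 ≤ m₂)]
  have h1 : ∑ n ∈ Finset.Ioc m₁ (ν-1), xi M₀ M₁ ω n ≤
      ∑ n ∈ Finset.Ioc m₁ (ν-1), V (refFun ω m₁ ν y n) * sgn (ω n) := by
    apply Finset.sum_le_sum
    intro n hn
    rw [Finset.mem_Ioc] at hn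
    rw [refFun_gstar ω m₁ ν y (by omega) (by omega)]
    exact term_ge_xi hd hV0 hV1
  have h2 : (∑ n ∈ Finset.Ioc (ν-1) m₂, xi M₀ M₁ ω n) - (M₀ + M₁) * ((l1 y : ℝ) + 1) ≤
      ∑ n ∈ Finset.Ioc (ν-1) m₂, V (refFun ω m₁ ν y n) * sgn (ω n) := by
    have hcard : (Finset.Ioc (ν-1) m₂).card = l1 y + 1 := by
      rw [Int.card_Ioc]
      omega
    have h3 : ∀ n ∈ Finset.Ioc (ν-1) m₂,
        xi M₀ M₁ ω n - (M₀ + M₁) ≤ V (refFun ω m₁ ν y n) * sgn (ω n) :=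
      fun n _ => term_ge_generic hV0 hV1 hM₀ hM₁ _
    have h4 := Finset.sum_le_sum h3
    rw [Finset.sum_sub_distrib, Finset.sum_const, hcard] at h4
    have h5 : ((l1 y + 1 : ℕ)) • (M₀ + M₁) = (M₀ + M₁) * ((l1 y : ℝ) + 1) := by
      rw [nsmul_eq_mul]
      push_cast
      ring
    rw [h5] at h4
    linarith
  linarith

/-! ### the merged path -/

def mergeFun {d : ℕ} (ω : ℤ → Bool) (m₁ t : ℤ) (γ : ℤ → X d) : ℤ → X d :=
  fun n => if n ≤ m₁ then 0 else if n < t then gstar d ω n else γ n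

lemma mergeFun_zero {d : ℕ} (ω : ℤ → Bool) (m₁ t : ℤ) (γ : ℤ → X d) {n : ℤ} (h : n ≤ m₁) :
    mergeFun ω m₁ t γ n = 0 := by rw [mergeFun, if_pos h]

lemma mergeFun_gstar {d : ℕ} (ω : ℤ → Bool) (m₁ t : ℤ) (γ : ℤ → X d) {n : ℤ}
    (h1 : m₁ < n) (h2 : n < t) : mergeFun ω m₁ t γ n = gstar d ω n := by
  rw [mergeFun, if_neg (by omega), if_pos h2]

lemma mergeFun_tail {d : ℕ} (ω : ℤ → Bool) (m₁ t : ℤ) (γ : ℤ → X d) {n : ℤ}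
    (h1 : m₁ < n) (h2 : t ≤ n) : mergeFun ω m₁ t γ n = γ n := by
  rw [mergeFun, if_neg (by omega), if_neg (by omega)]

lemma mergeFun_spec {d : ℕ} {ω : ℤ → Bool} {m₁ m₂ t : ℤ} {γ : ℤ → X d} {y : X d}
    (hA : Adm m₁ m₂ γ) (hF : Frozen m₁ m₂ γ) (hy : γ m₂ = y)
    (ht1 : m₁ < t) (ht2 : t ≤ m₂) (hm : γ t = gstar d ω t) :
    Adm m₁ m₂ (mergeFun ω m₁ t γ) ∧ Frozen m₁ m₂ (mergeFun ω m₁ t γ) ∧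
    mergeFun ω m₁ t γ m₁ = 0 ∧ mergeFun ω m₁ t γ m₂ = y := by
  refine ⟨?_, ⟨?_, ?_⟩, ?_, ?_⟩
  · intro n hn hn2
    rw [stepOK_iff]
    rcases eq_or_lt_of_le hn with he | hlt
    · -- n = m₁
      rw [← he, mergeFun_zero ω m₁ t γ le_rfl, sub_zero]
      rcases lt_or_ge (m₁ + 1) t with h | h
      · rw [mergeFun_gstar ω m₁ t γ (by omega) h]
        rcases gstar_mem (d := d) ω (m₁+1) with hg | hg <;> rw [hg]
        · rw [l1_zero]; omega
        · exact l1_e1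
      · have he2 : m₁ + 1 = t := by omega
        rw [mergeFun_tail ω m₁ t γ (by omega) (by omega), he2, hm]
        rcases gstar_mem (d := d) ω t with hg | hg <;> rw [hg]
        · rw [l1_zero]; omega
        · exact l1_e1
    · rcases lt_or_ge (n+1) t with h | h
      · rw [mergeFun_gstar ω m₁ t γ (by omega) h, mergeFun_gstar ω m₁ t γ hlt (by omega)]
        exact l1_step_e1 (gstar_mem ω n) (gstar_mem ω _)
      · rcases lt_or_ge n t with h2 | h2
        · have he2 : n + 1 = t := by omega
          rw [mergeFun_tail ω m₁ t γ (by omega) (by omega),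
            mergeFun_gstar ω m₁ t γ hlt h2, he2, hm]
          exact l1_step_e1 (gstar_mem ω n) (gstar_mem ω _)
        · rw [mergeFun_tail ω m₁ t γ (by omega) (by omega),
            mergeFun_tail ω m₁ t γ (by omega) h2]
          exact (stepOK_iff _ _).mp (hA n hn hn2)
  · intro n hn
    rw [mergeFun_zero ω m₁ t γ hn, mergeFun_zero ω m₁ t γ le_rfl]
  · intro n hn
    rw [mergeFun_tail ω m₁ t γ (by omega) (by omega),
      mergeFun_tail ω m₁ t γ (by omega) ht2, hF.2 n hn]
  · exact mergeFun_zero ω m₁ t γ le_rfl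
  · rw [mergeFun_tail ω m₁ t γ (by omega) ht2, hy]

/-! ### reconstruction of a path from its step code -/

lemma path_reconstruct {d : ℕ} {m₁ m₂ : ℤ} {γ₁ γ₂ : ℤ → X d}
    (hA₁ : Adm m₁ m₂ γ₁) (hA₂ : Adm m₁ m₂ γ₂)
    (hF₁ : Frozen m₁ m₂ γ₁) (hF₂ : Frozen m₁ m₂ γ₂)
    {t : ℤ} (ht1 : m₁ ≤ t) (ht2 : t ≤ m₂)
    (hcode : ∀ n : ℤ, m₁ ≤ n → n < t → enc (γ₁ n - γ₁ (n+1)) = enc (γ₂ n - γ₂ (n+1)))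
    (htail : ∀ n : ℤ, t ≤ n → γ₁ n = γ₂ n) : γ₁ = γ₂ := by
  have hmid : ∀ k : ℕ, m₁ ≤ t - k → γ₁ (t - k) = γ₂ (t - k) := by
    intro k
    induction k with
    | zero =>
      intro _
      have : t - (0:ℕ) = t := by omega
      rw [this]
      exact htail t le_rfl
    | succ k ih =>
      intro hk
      set n := t - (k+1:ℕ) with hn
      have hnm₁ : m₁ ≤ n := hk
      have hnt : n < t := by omega
      have hstep₁ : l1 (γ₁ n - γ₁ (n+1)) ≤ 1 := by
        rw [l1_sub_comm]
        exact (stepOK_iff _ _).mp (hA₁ n hnm₁ (by omega))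
      have hstep₂ : l1 (γ₂ n - γ₂ (n+1)) ≤ 1 := by
        rw [l1_sub_comm]
        exact (stepOK_iff _ _).mp (hA₂ n hnm₁ (by omega))
      have hnext : γ₁ (n+1) = γ₂ (n+1) := by
        have he : n + 1 = t - (k:ℕ) := by omega
        rw [he]
        exact ih (by omega)
      have h1 : γ₁ n = γ₁ (n+1) + dec (enc (γ₁ n - γ₁ (n+1))) := by
        rw [dec_enc hstep₁]; abel
      have h2 : γ₂ n = γ₂ (n+1) + dec (enc (γ₂ n - γ₂ (n+1))) := by
        rw [dec_enc hstep₂]; abel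
      rw [h1, h2, hcode n hnm₁ hnt, hnext]
  funext n
  rcases le_or_gt t n with h | h
  · exact htail n h
  rcases le_or_gt m₁ n with h2 | h2
  · have he : n = t - ((t - n).toNat : ℕ) := by omega
    rw [he]
    exact hmid _ (by omega)
  · have hm : γ₁ m₁ = γ₂ m₁ := by
      have he : m₁ = t - ((t - m₁).toNat : ℕ) := by omega
      rw [he]
      exact hmid _ (by omega)
    rw [hF₁.1 n (by omega), hF₂.1 n (by omega), hm]

/-! ### energy of a merged path -/

lemma merge_ge_r {d : ℕ} {M₀ M₁ lam : ℝ} {r : ℕ} {m₁ m₂ : ℤ} {ω : ℤ → Bool}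
    (hG : Good d M₀ M₁ lam r m₁ m₂ ω) {γ : ℤ → X d}
    (hA : Adm m₁ m₂ γ) (hx : r < nm (γ m₁))
    {k₀ : ℕ} (hk : γ (m₁+1+(k₀:ℤ)) = gstar d ω (m₁+1+(k₀:ℤ)))
    (ht2 : m₁+1+(k₀:ℤ) ≤ m₂) : r ≤ k₀ := by
  by_contra hc
  push_neg at hc
  -- n := m₁+1+k₀ lies in the all-ones block, so gstar = 0 there
  have hω : ω (m₁+1+(k₀:ℤ)) = true := hG.2.1 _ (by omega) (by omega)
  have hg0 : gstar d ω (m₁+1+(k₀:ℤ)) = 0 := by rw [gstar, if_pos hω]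
  -- but γ cannot be at 0 yet
  have hdisp : l1 (γ (m₁ + ((k₀+1:ℕ):ℤ)) - γ m₁) ≤ k₀ + 1 :=
    adm_displ hA (k₀+1) m₁ le_rfl (by push_cast; omega)
  have hnm : (r:ℕ) < l1 (γ m₁) := lt_of_lt_of_le hx (nm_le_l1 _)
  have hne : γ (m₁+1+(k₀:ℤ)) = 0 := by rw [hk, hg0]
  have he : m₁ + ((k₀+1:ℕ):ℤ) = m₁+1+(k₀:ℤ) := by push_cast; omega
  rw [he, hne] at hdisp
  rw [l1_sub_comm] at hdisp
  rw [sub_zero] at hdisp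
  omega

lemma merge_energy {d : ℕ} (hd : 1 ≤ d) {V : X d → ℝ} {ω : ℤ → Bool} {M₀ M₁ lam : ℝ}
    {r : ℕ} {m₁ m₂ : ℤ}
    (hV0 : V 0 = M₀) (hV1 : ∀ x : X d, x ≠ 0 → |V x| ≤ M₁)
    (hM₀ : 0 ≤ M₀) (hM₁ : 0 ≤ M₁)
    (hG : Good d M₀ M₁ lam r m₁ m₂ ω) {γ : ℤ → X d}
    (hA : Adm m₁ m₂ γ)
    {k₀ : ℕ} (hrk : r ≤ k₀) (ht2 : m₁+1+(k₀:ℤ) ≤ m₂)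
    (hmin : ∀ k : ℕ, k < k₀ → ¬(γ (m₁+1+(k:ℤ)) = gstar d ω (m₁+1+(k:ℤ)) ∧ m₁+1+(k:ℤ) ≤ m₂)) :
    Phi V ω m₁ m₂ γ ≤ (k₀:ℝ)*M₁ - ((r:ℝ)*M₀ + ((k₀-r:ℕ):ℝ)*(M₁ + lam + Real.log (2*(d:ℝ)+1)))
      + Phi V ω m₁ m₂ (mergeFun ω m₁ (m₁+1+(k₀:ℤ)) γ) := by
  set t : ℤ := m₁+1+(k₀:ℤ) with htdef
  rw [Phi_Ioc, Phi_Ioc]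
  rw [sum_Ioc_split (f := fun n => V (γ n) * sgn (ω n))
      (by omega : m₁ ≤ t - 1) (by omega : t - 1 ≤ m₂),
    sum_Ioc_split (f := fun n => V (mergeFun ω m₁ t γ n) * sgn (ω n))
      (by omega : m₁ ≤ t - 1) (by omega : t - 1 ≤ m₂)]
  have htail : ∑ n ∈ Finset.Ioc (t-1) m₂, V (γ n) * sgn (ω n)
      = ∑ n ∈ Finset.Ioc (t-1) m₂, V (mergeFun ω m₁ t γ n) * sgn (ω n) := by
    apply Finset.sum_congr rfl
    intro n hn
    rw [Finset.mem_Ioc] at hn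
    rw [mergeFun_tail ω m₁ t γ (by omega) (by omega)]
  have hhead₁ : ∑ n ∈ Finset.Ioc m₁ (t-1), V (γ n) * sgn (ω n) ≤ (k₀:ℝ)*M₁ := by
    have hcard : (Finset.Ioc m₁ (t-1)).card = k₀ := by
      rw [Int.card_Ioc]; omega
    calc ∑ n ∈ Finset.Ioc m₁ (t-1), V (γ n) * sgn (ω n)
        ≤ ∑ _n ∈ Finset.Ioc m₁ (t-1), M₁ := by
          apply Finset.sum_le_sum
          intro n hn
          rw [Finset.mem_Ioc] at hn
          apply term_le hV0 hV1 hM₀ hM₁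
          intro hω hγ0
          have hk : ((n - m₁ - 1).toNat : ℤ) = n - m₁ - 1 := by omega
          have hne : n = m₁ + 1 + ((n - m₁ - 1).toNat : ℤ) := by omega
          apply hmin (n - m₁ - 1).toNat (by omega)
          constructor
          · rw [← hne, hγ0, gstar, if_pos hω]
          · omega
      _ = (k₀:ℝ)*M₁ := by
          rw [Finset.sum_const, hcard, nsmul_eq_mul]
  have hhead₂ : (r:ℝ)*M₀ + ((k₀-r:ℕ):ℝ)*(M₁ + lam + Real.log (2*(d:ℝ)+1)) ≤
      ∑ n ∈ Finset.Ioc m₁ (t-1), V (mergeFun ω m₁ t γ n) * sgn (ω n) := by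
    have h1 : ∑ n ∈ Finset.Ioc m₁ (t-1), xi M₀ M₁ ω n ≤
        ∑ n ∈ Finset.Ioc m₁ (t-1), V (mergeFun ω m₁ t γ n) * sgn (ω n) := by
      apply Finset.sum_le_sum
      intro n hn
      rw [Finset.mem_Ioc] at hn
      rw [mergeFun_gstar ω m₁ t γ (by omega) (by omega)]
      exact term_ge_xi hd hV0 hV1
    have h2 := xi_sum_lower hG (k₀ - r)
    have he : m₁ + (r:ℤ) + ((k₀-r:ℕ):ℤ) = t - 1 := by
      push_cast [htdef]
      omega
    rw [he] at h2
    linarith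
  linarith

/-! ### energy bound for never-merging paths -/

lemma nomerge_energy {d : ℕ} {V : X d → ℝ} {ω : ℤ → Bool} {M₀ M₁ lam : ℝ}
    {r : ℕ} {m₁ m₂ : ℤ}
    (hV0 : V 0 = M₀) (hV1 : ∀ x : X d, x ≠ 0 → |V x| ≤ M₁)
    (hM₀ : 0 ≤ M₀) (hM₁ : 0 ≤ M₁)
    (hG : Good d M₀ M₁ lam r m₁ m₂ ω) {γ : ℤ → X d}
    (hrN : (r:ℤ) < m₂ - m₁)
    (hnm : ∀ k : ℕ, ¬(γ (m₁+1+(k:ℤ)) = gstar d ω (m₁+1+(k:ℤ)) ∧ m₁+1+(k:ℤ) ≤ m₂)) :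
    Phi V ω m₁ m₂ γ ≤ (((m₂-m₁).toNat:ℝ))*M₁
      - ((r:ℝ)*M₀ + (((m₂-m₁).toNat-r:ℕ):ℝ)*(M₁ + lam + Real.log (2*(d:ℝ)+1)))
      + ∑ n ∈ Finset.Ioc m₁ m₂, xi M₀ M₁ ω n := by
  set N : ℕ := (m₂-m₁).toNat with hN
  have hNe : (N:ℤ) = m₂ - m₁ := by omega
  have h1 : Phi V ω m₁ m₂ γ ≤ (N:ℝ)*M₁ := by
    rw [Phi_Ioc]
    have hcard : (Finset.Ioc m₁ m₂).card = N := by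
      rw [Int.card_Ioc]
    calc ∑ n ∈ Finset.Ioc m₁ m₂, V (γ n) * sgn (ω n)
        ≤ ∑ _n ∈ Finset.Ioc m₁ m₂, M₁ := by
          apply Finset.sum_le_sum
          intro n hn
          rw [Finset.mem_Ioc] at hn
          apply term_le hV0 hV1 hM₀ hM₁
          intro hω hγ0
          apply hnm (n - m₁ - 1).toNat
          have hne : n = m₁ + 1 + ((n - m₁ - 1).toNat : ℤ) := by omega
          constructor
          · rw [← hne, hγ0, gstar, if_pos hω]
          · omega
      _ = (N:ℝ)*M₁ := by rw [Finset.sum_const, hcard, nsmul_eq_mul]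
  have h2 := xi_sum_lower hG (N - r)
  have he : m₁ + (r:ℤ) + ((N-r:ℕ):ℤ) = m₂ := by omega
  rw [he] at h2
  linarith

/-! ### the big sigma/target types -/

abbrev SIG (d r : ℕ) (m₁ m₂ : ℤ) (y : X d) :=
  Σ x : {x : X d // r < nm x},
    {γ : ℤ → X d // Adm m₁ m₂ γ ∧ Frozen m₁ m₂ γ ∧ γ m₁ = x.1 ∧ γ m₂ = y}

abbrev PT0 (d : ℕ) (m₁ m₂ : ℤ) (y : X d) :=
  {γ : ℤ → X d // Adm m₁ m₂ γ ∧ Frozen m₁ m₂ γ ∧ γ m₁ = (0 : X d) ∧ γ m₂ = y}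

abbrev TGT (d r : ℕ) (m₁ m₂ : ℤ) (y : X d) :=
  Σ _j : ℕ, PT0 d m₁ m₂ y × (Fin (r + 1 + _j) → Step d)

lemma sig_ext {d r : ℕ} {m₁ m₂ : ℤ} {y : X d} {s₁ s₂ : SIG d r m₁ m₂ y}
    (h : s₁.2.1 = s₂.2.1) : s₁ = s₂ := by
  obtain ⟨⟨x₁, hx₁⟩, γ₁, hγ₁⟩ := s₁
  obtain ⟨⟨x₂, hx₂⟩, γ₂, hγ₂⟩ := s₂
  simp only at h
  subst h
  have hx : x₁ = x₂ := by
    have h1 : γ₁ m₁ = x₁ := hγ₁.2.2.1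
    have h2 : γ₁ m₁ = x₂ := hγ₂.2.2.1
    rw [← h1, ← h2]
  subst hx
  rfl

lemma card_codes (d n : ℕ) : Fintype.card (Fin n → Step d) = (2*d+1)^n := by
  rw [Fintype.card_fun, Fintype.card_fin]
  congr 1
  simp only [Step, Fintype.card_option, Fintype.card_prod, Fintype.card_fin,
    Fintype.card_bool]
  omega

/-! ### the main estimate -/

set_option maxHeartbeats 1000000 in
lemma main_bound {d : ℕ} (hd : 1 ≤ d) {M₀ M₁ lam : ℝ} (hM₀ : 0 ≤ M₀) (hM₁ : 0 ≤ M₁)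
    (hlam : 0 < lam) {r : ℕ} {m₁ m₂ : ℤ} {ω : ℤ → Bool} {V : X d → ℝ}
    (hV0 : V 0 = M₀) (hV1 : ∀ x : X d, x ≠ 0 → |V x| ≤ M₁)
    (hG : Good d M₀ M₁ lam r m₁ m₂ ω) {y : X d} (hy : nm y ≤ r)
    (hN1 : (r:ℤ) + (l1 y : ℤ) + 2 ≤ m₂ - m₁)
    (hN2 : (M₀+M₁) * ((l1 y : ℝ)+1) ≤ lam * (((m₂ - m₁).toNat : ℝ) - (r:ℝ))) :
    (∑' x : {x : X d // r < nm x}, Z V ω m₁ m₂ x.1 y) ≤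
      ((2*(d:ℝ)+1)/(1-Real.exp (-lam)) + 1) *
        Real.exp (-2*((M₀-3*M₁)/2 - Real.log (2*(d:ℝ)+1))*(r:ℝ)) * Z V ω m₁ m₂ 0 y := by
  classical
  set ℒ : ℝ := Real.log (2*(d:ℝ)+1) with hLdef
  have hd1 : (1:ℝ) ≤ 2*(d:ℝ)+1 := by
    have : (0:ℝ) ≤ (d:ℝ) := Nat.cast_nonneg d
    linarith
  have hd0 : (0:ℝ) ≤ 2*(d:ℝ)+1 := by linarith
  have hL0 : (0:ℝ) ≤ ℒ := Real.log_nonneg hd1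
  have hm12 : m₁ < m₂ := hG.1
  set N : ℕ := (m₂ - m₁).toNat with hN
  have hNe : (N:ℤ) = m₂ - m₁ := by omega
  have hrN : (r:ℤ) < m₂ - m₁ := by
    have := Int.ofNat_nonneg (l1 y)
    omega
  have hrNn : r < N := by omega
  set q : ℝ := Real.exp (-lam) with hq
  have hq0 : (0:ℝ) ≤ q := (Real.exp_pos _).le
  have hq1 : q < 1 := by
    rw [hq]
    apply Real.exp_lt_one_iff.mpr ?_
    linarith
  have h1q : (0:ℝ) < 1 - q := by linarith
  set β : ℝ := M₁ + lam + ℒ with hβ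
  set E : ℝ := Real.exp (-2*((M₀-3*M₁)/2 - ℒ)*(r:ℝ)) with hE
  have hE0 : 0 ≤ E := (Real.exp_pos _).le
  -- the merge time predicate
  set M : SIG d r m₁ m₂ y → Prop := fun s =>
    ∃ k : ℕ, s.2.1 (m₁+1+(k:ℤ)) = gstar d ω (m₁+1+(k:ℤ)) ∧ m₁+1+(k:ℤ) ≤ m₂ with hM
  -- the weight
  set w : SIG d r m₁ m₂ y → ENNReal := fun s =>
    ENNReal.ofReal (Real.exp (Phi V ω m₁ m₂ s.2.1)) with hw
  set Zenn0 : ENNReal := Zenn V ω m₁ m₂ 0 y with hZ0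
  set A : ℕ → ℝ := fun j =>
    Real.exp ((r:ℝ)*M₁ + (j:ℝ)*M₁ - (r:ℝ)*M₀ - (j:ℝ)*β) with hA
  have hfind_ge : ∀ s : {s : SIG d r m₁ m₂ y // M s}, r ≤ Nat.find s.2 := by
    intro s
    have hspec := Nat.find_spec s.2
    have hxeq : s.1.2.1 m₁ = s.1.1.1 := s.1.2.2.2.2.1
    apply merge_ge_r hG s.1.2.2.1 _ hspec.1 hspec.2
    rw [hxeq]
    exact s.1.1.2
  -- ### the merge part
  have hmerge : (∑' s : SIG d r m₁ m₂ y, if M s then w s else 0) ≤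
      (∑' j : ℕ, ((2*d+1:ℕ):ENNReal)^(r+1+j) * ENNReal.ofReal (A j)) * Zenn0 := by
    have hsub : (∑' s : SIG d r m₁ m₂ y, if M s then w s else 0)
        = ∑' s : {s : SIG d r m₁ m₂ y // M s}, w s.1 := by
      have h0 : (∑' s : {s : SIG d r m₁ m₂ y // M s}, w s.1)
          = ∑' s : SIG d r m₁ m₂ y, Set.indicator {s | M s} w s := tsum_subtype _ w
      rw [h0]
      apply tsum_congr
      intro s
      by_cases h : M s
      · rw [if_pos h]
        exact (Set.indicator_of_mem (show s ∈ {s | M s} from h) w).symm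
      · rw [if_neg h]
        exact (Set.indicator_of_notMem (show s ∉ {s | M s} from h) w).symm
    rw [hsub]
    -- the injection
    set vT : TGT d r m₁ m₂ y → ENNReal := fun p =>
      ENNReal.ofReal (A p.1) * ENNReal.ofReal (Real.exp (Phi V ω m₁ m₂ p.2.1.1)) with hvT
    set Fm : {s : SIG d r m₁ m₂ y // M s} → TGT d r m₁ m₂ y := fun s =>
      ⟨Nat.find s.2 - r,
       ⟨mergeFun ω m₁ (m₁+1+(Nat.find s.2 : ℤ)) s.1.2.1,
        (mergeFun_spec s.1.2.2.1 s.1.2.2.2.1 s.1.2.2.2.2.2 (by omega)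
          (Nat.find_spec s.2).2 (Nat.find_spec s.2).1 : _)⟩,
       fun i => enc (s.1.2.1 (m₁ + ((i:ℕ):ℤ)) - s.1.2.1 (m₁ + ((i:ℕ):ℤ) + 1))⟩ with hFm
    have hpt : ∀ s : {s : SIG d r m₁ m₂ y // M s}, w s.1 ≤ vT (Fm s) := by
      intro s
      have hspec := Nat.find_spec s.2
      have hrk := hfind_ge s
      have hmin : ∀ k : ℕ, k < Nat.find s.2 →
          ¬(s.1.2.1 (m₁+1+(k:ℤ)) = gstar d ω (m₁+1+(k:ℤ)) ∧ m₁+1+(k:ℤ) ≤ m₂) :=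
        fun k hk => Nat.find_min s.2 hk
      have hEn := merge_energy hd hV0 hV1 hM₀ hM₁ hG s.1.2.2.1 hrk hspec.2 hmin
      have hcast : ((Nat.find s.2 : ℕ):ℝ) = (r:ℝ) + ((Nat.find s.2 - r : ℕ):ℝ) := by
        have hcc := Nat.add_sub_cancel' hrk
        exact_mod_cast hcc.symm
      calc w s.1 = ENNReal.ofReal (Real.exp (Phi V ω m₁ m₂ s.1.2.1)) := rfl
        _ ≤ ENNReal.ofReal (A (Nat.find s.2 - r) *
              Real.exp (Phi V ω m₁ m₂ (mergeFun ω m₁ (m₁+1+(Nat.find s.2 : ℤ)) s.1.2.1))) := by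
            apply ENNReal.ofReal_le_ofReal
            rw [hA, ← Real.exp_add]
            apply Real.exp_le_exp.mpr
            have hmm : (r:ℝ)*M₁ + ((Nat.find s.2 - r : ℕ):ℝ)*M₁ = ((Nat.find s.2 : ℕ):ℝ)*M₁ := by
              rw [hcast]; ring
            have hβR : β = M₁ + lam + Real.log (2*(d:ℝ)+1) := by rw [hβ, hLdef]
            nlinarith [hEn, hβR, hmm]
        _ = vT (Fm s) := by
            rw [ENNReal.ofReal_mul (by positivity)]
    have hFinj : Function.Injective Fm := by
      intro s₁ s₂ heq
      have hr₁ := hfind_ge s₁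
      have hr₂ := hfind_ge s₂
      have hj : Nat.find s₁.2 - r = Nat.find s₂.2 - r :=
        congrArg (fun p : TGT d r m₁ m₂ y => p.1) heq
      have hk : Nat.find s₁.2 = Nat.find s₂.2 := by omega
      have hk' : ((Nat.find s₁.2 : ℕ) : ℤ) = ((Nat.find s₂.2 : ℕ) : ℤ) := by exact_mod_cast hk
      have hpath : mergeFun ω m₁ (m₁+1+(Nat.find s₁.2 : ℤ)) s₁.1.2.1
          = mergeFun ω m₁ (m₁+1+(Nat.find s₂.2 : ℤ)) s₂.1.2.1 :=
        congrArg (fun p : TGT d r m₁ m₂ y => p.2.1.1) heq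
      have hcode : ∀ k : ℕ, k ≤ Nat.find s₁.2 →
          enc (s₁.1.2.1 (m₁ + (k:ℤ)) - s₁.1.2.1 (m₁ + (k:ℤ) + 1))
            = enc (s₂.1.2.1 (m₁ + (k:ℤ)) - s₂.1.2.1 (m₁ + (k:ℤ) + 1)) := by
        intro k hkk
        have h1 := congrArg (fun p : TGT d r m₁ m₂ y =>
          if h : k < r + 1 + p.1 then p.2.2 ⟨k, h⟩ else none) heq
        simp only [hFm] at h1
        rw [dif_pos (by omega), dif_pos (by omega)] at h1
        exact h1
      apply Subtype.ext
      apply sig_ext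
      have hspec₁ := Nat.find_spec s₁.2
      apply path_reconstruct s₁.1.2.2.1 s₂.1.2.2.1 s₁.1.2.2.2.1 s₂.1.2.2.2.1
        (t := m₁+1+((Nat.find s₁.2 : ℕ):ℤ)) (by omega) hspec₁.2
      · intro n hn hnt
        have hkn : ((n - m₁).toNat : ℤ) = n - m₁ := by omega
        have he : n = m₁ + ((n - m₁).toNat : ℤ) := by omega
        rw [he]
        exact hcode (n - m₁).toNat (by omega)
      · intro n hn
        have e₁ : s₁.1.2.1 n = mergeFun ω m₁ (m₁+1+(Nat.find s₁.2 : ℤ)) s₁.1.2.1 n :=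
          (mergeFun_tail ω m₁ _ _ (by omega) (by omega)).symm
        have e₂ : s₂.1.2.1 n = mergeFun ω m₁ (m₁+1+(Nat.find s₂.2 : ℤ)) s₂.1.2.1 n :=
          (mergeFun_tail ω m₁ _ _ (by omega) (by omega)).symm
        rw [e₁, e₂, hpath]
    calc (∑' s : {s : SIG d r m₁ m₂ y // M s}, w s.1)
        ≤ ∑' s : {s : SIG d r m₁ m₂ y // M s}, vT (Fm s) := ENNReal.tsum_le_tsum hpt
      _ ≤ ∑' p : TGT d r m₁ m₂ y, vT p := ENNReal.tsum_comp_le_tsum_of_injective hFinj vT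
      _ = (∑' j : ℕ, ((2*d+1:ℕ):ENNReal)^(r+1+j) * ENNReal.ofReal (A j)) * Zenn0 := by
          rw [ENNReal.tsum_sigma' vT, ← ENNReal.tsum_mul_right]
          apply tsum_congr
          intro j
          rw [ENNReal.tsum_prod']
          have hinner : ∀ p : PT0 d m₁ m₂ y,
              (∑' _c : Fin (r+1+j) → Step d, vT ⟨j, (p, _c)⟩)
                = ((2*d+1:ℕ):ENNReal)^(r+1+j) *
                  (ENNReal.ofReal (A j) * ENNReal.ofReal (Real.exp (Phi V ω m₁ m₂ p.1))) := by
            intro p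
            have hcc : ∀ _c : Fin (r+1+j) → Step d, vT ⟨j, (p, _c)⟩
                = ENNReal.ofReal (A j) * ENNReal.ofReal (Real.exp (Phi V ω m₁ m₂ p.1)) :=
              fun _ => rfl
            rw [tsum_congr hcc, tsum_fintype, Finset.sum_const, nsmul_eq_mul,
              Finset.card_univ, card_codes, Nat.cast_pow]
          rw [tsum_congr hinner, ENNReal.tsum_mul_left, ENNReal.tsum_mul_left]
          rw [mul_assoc]
          rfl
  -- ### the no-merge part
  have hBB : ∀ s : SIG d r m₁ m₂ y, ¬ M s →
      w s ≤ ENNReal.ofReal (Real.exp ((N:ℝ)*M₁ - (r:ℝ)*M₀ - ((N-r:ℕ):ℝ)*β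
        + (M₀+M₁)*((l1 y:ℝ)+1))) * Zenn0 := by
    intro s hMs
    have hnm : ∀ k : ℕ, ¬(s.2.1 (m₁+1+(k:ℤ)) = gstar d ω (m₁+1+(k:ℤ)) ∧ m₁+1+(k:ℤ) ≤ m₂) := by
      intro k hk
      exact hMs ⟨k, hk⟩
    have h1 := nomerge_energy hV0 hV1 hM₀ hM₁ hG (γ := s.2.1) hrN hnm
    have hrf := refFun_spec ω m₁ m₂ y (by omega)
    have h2 := refFun_energy (V := V) (ω := ω) hd hV0 hV1 hM₀ hM₁ m₁ m₂ y (by omega)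
    have h3 : Phi V ω m₁ m₂ s.2.1 ≤ ((N:ℝ)*M₁ - (r:ℝ)*M₀ - ((N-r:ℕ):ℝ)*β
        + (M₀+M₁)*((l1 y:ℝ)+1)) + Phi V ω m₁ m₂ (refFun ω m₁ (m₂ - (l1 y : ℤ)) y) := by
      rw [← hN] at h1
      have hβR : β = M₁ + lam + Real.log (2*(d:ℝ)+1) := by rw [hβ, hLdef]
      nlinarith [h1, h2, hβR]
    calc w s = ENNReal.ofReal (Real.exp (Phi V ω m₁ m₂ s.2.1)) := rfl
      _ ≤ ENNReal.ofReal (Real.exp ((N:ℝ)*M₁ - (r:ℝ)*M₀ - ((N-r:ℕ):ℝ)*β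
            + (M₀+M₁)*((l1 y:ℝ)+1)) *
            Real.exp (Phi V ω m₁ m₂ (refFun ω m₁ (m₂ - (l1 y : ℤ)) y))) := by
          apply ENNReal.ofReal_le_ofReal
          rw [← Real.exp_add]
          exact Real.exp_le_exp.mpr h3
      _ = ENNReal.ofReal (Real.exp ((N:ℝ)*M₁ - (r:ℝ)*M₀ - ((N-r:ℕ):ℝ)*β
            + (M₀+M₁)*((l1 y:ℝ)+1))) *
          ENNReal.ofReal (Real.exp (Phi V ω m₁ m₂ (refFun ω m₁ (m₂ - (l1 y : ℤ)) y))) := by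
          rw [ENNReal.ofReal_mul (by positivity)]
      _ ≤ _ := by
          apply mul_le_mul_right ?_ _
          rw [hZ0, Zenn]
          exact ENNReal.le_tsum (⟨refFun ω m₁ (m₂ - (l1 y : ℤ)) y, hrf⟩ :
            {γ : ℤ → X d // Adm m₁ m₂ γ ∧ Frozen m₁ m₂ γ ∧ γ m₁ = (0:X d) ∧ γ m₂ = y})
  have hnomerge : (∑' s : SIG d r m₁ m₂ y, if M s then 0 else w s) ≤
      ((2*d+1:ℕ):ENNReal)^N * (ENNReal.ofReal (Real.exp ((N:ℝ)*M₁ - (r:ℝ)*M₀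
        - ((N-r:ℕ):ℝ)*β + (M₀+M₁)*((l1 y:ℝ)+1))) * Zenn0) := by
    have hsub : (∑' s : SIG d r m₁ m₂ y, if M s then 0 else w s)
        = ∑' s : {s : SIG d r m₁ m₂ y // ¬ M s}, w s.1 := by
      have h0 : (∑' s : {s : SIG d r m₁ m₂ y // ¬ M s}, w s.1)
          = ∑' s : SIG d r m₁ m₂ y, Set.indicator {s | ¬ M s} w s := tsum_subtype _ w
      rw [h0]
      apply tsum_congr
      intro s
      by_cases h : M s
      · rw [if_pos h]
        exact (Set.indicator_of_notMem (show s ∉ {s | ¬ M s} from fun hc => hc h) w).symm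
      · rw [if_neg h]
        exact (Set.indicator_of_mem (show s ∈ {s | ¬ M s} from h) w).symm
    rw [hsub]
    set vN : (Fin N → Step d) → ENNReal := fun _ =>
      ENNReal.ofReal (Real.exp ((N:ℝ)*M₁ - (r:ℝ)*M₀ - ((N-r:ℕ):ℝ)*β
        + (M₀+M₁)*((l1 y:ℝ)+1))) * Zenn0 with hvN
    set Fn : {s : SIG d r m₁ m₂ y // ¬ M s} → (Fin N → Step d) := fun s i =>
      enc (s.1.2.1 (m₁ + ((i:ℕ):ℤ)) - s.1.2.1 (m₁ + ((i:ℕ):ℤ) + 1)) with hFn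
    have hFinj : Function.Injective Fn := by
      intro s₁ s₂ heq
      apply Subtype.ext
      apply sig_ext
      apply path_reconstruct s₁.1.2.2.1 s₂.1.2.2.1 s₁.1.2.2.2.1 s₂.1.2.2.2.1
        (t := m₂) (by omega) le_rfl
      · intro n hn hnt
        have he : n = m₁ + (((n - m₁).toNat : ℕ):ℤ) := by omega
        have h1 := congrFun heq ⟨(n - m₁).toNat, by omega⟩
        simp only [hFn] at h1
        rw [he]
        exact h1
      · intro n hn
        rw [s₁.1.2.2.2.1.2 n hn, s₂.1.2.2.2.1.2 n hn,
          s₁.1.2.2.2.2.2, s₂.1.2.2.2.2.2]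
    calc (∑' s : {s : SIG d r m₁ m₂ y // ¬ M s}, w s.1)
        ≤ ∑' s : {s : SIG d r m₁ m₂ y // ¬ M s}, vN (Fn s) :=
          ENNReal.tsum_le_tsum (fun s => hBB s.1 s.2)
      _ ≤ ∑' c : Fin N → Step d, vN c := ENNReal.tsum_comp_le_tsum_of_injective hFinj vN
      _ = ((2*d+1:ℕ):ENNReal)^N * (ENNReal.ofReal (Real.exp ((N:ℝ)*M₁ - (r:ℝ)*M₀
            - ((N-r:ℕ):ℝ)*β + (M₀+M₁)*((l1 y:ℝ)+1))) * Zenn0) := by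
          rw [tsum_fintype, Finset.sum_const, nsmul_eq_mul, Finset.card_univ, card_codes,
            Nat.cast_pow]
  -- ### real estimates for the coefficients
  have hpow_exp : ∀ n : ℕ, (2*(d:ℝ)+1)^n = Real.exp ((n:ℝ)*ℒ) := by
    intro n
    rw [Real.exp_nat_mul, Real.exp_log (by linarith)]
  have hCm : (∑' j : ℕ, ((2*d+1:ℕ):ENNReal)^(r+1+j) * ENNReal.ofReal (A j)) ≤
      ENNReal.ofReal ((2*(d:ℝ)+1)/(1-q) * E) := by
    have hterm : ∀ j : ℕ, ((2*d+1:ℕ):ENNReal)^(r+1+j) * ENNReal.ofReal (A j)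
        = ENNReal.ofReal (((2*(d:ℝ)+1)^(r+1) * Real.exp ((r:ℝ)*(M₁-M₀))) * q^j) := by
      intro j
      have hc : ((2*d+1:ℕ):ENNReal) = ENNReal.ofReal (2*(d:ℝ)+1) := by
        rw [← ENNReal.ofReal_natCast]
        congr 1
        push_cast
        ring
      rw [hc, ← ENNReal.ofReal_pow hd0, ← ENNReal.ofReal_mul (by positivity)]
      congr 1
      have h1 : (2*(d:ℝ)+1)^(r+1+j) = (2*(d:ℝ)+1)^(r+1) * (2*(d:ℝ)+1)^j := by
        rw [pow_add]
      have h2 : A j = Real.exp ((r:ℝ)*(M₁-M₀)) * Real.exp ((j:ℝ)*(M₁-β)) := by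
        rw [hA, ← Real.exp_add, Real.exp_eq_exp]
        ring
      have h3 : (2*(d:ℝ)+1)^j * Real.exp ((j:ℝ)*(M₁-β)) = q^j := by
        rw [hpow_exp j, ← Real.exp_add, hq, ← Real.exp_nat_mul, Real.exp_eq_exp, hβ]
        ring
      rw [h1, h2]
      calc (2*(d:ℝ)+1)^(r+1) * (2*(d:ℝ)+1)^j *
            (Real.exp ((r:ℝ)*(M₁-M₀)) * Real.exp ((j:ℝ)*(M₁-β)))
          = (2*(d:ℝ)+1)^(r+1) * Real.exp ((r:ℝ)*(M₁-M₀)) *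
            ((2*(d:ℝ)+1)^j * Real.exp ((j:ℝ)*(M₁-β))) := by ring
        _ = (2*(d:ℝ)+1)^(r+1) * Real.exp ((r:ℝ)*(M₁-M₀)) * q^j := by rw [h3]
    calc (∑' j : ℕ, ((2*d+1:ℕ):ENNReal)^(r+1+j) * ENNReal.ofReal (A j))
        = ∑' j : ℕ, ENNReal.ofReal (((2*(d:ℝ)+1)^(r+1) * Real.exp ((r:ℝ)*(M₁-M₀))) * q^j) :=
          tsum_congr hterm
      _ = ENNReal.ofReal (∑' j : ℕ, ((2*(d:ℝ)+1)^(r+1) * Real.exp ((r:ℝ)*(M₁-M₀))) * q^j) :=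
          (ENNReal.ofReal_tsum_of_nonneg (fun j => by positivity)
            ((summable_geometric_of_lt_one hq0 hq1).mul_left _)).symm
      _ ≤ ENNReal.ofReal ((2*(d:ℝ)+1)/(1-q) * E) := ?_
    apply ENNReal.ofReal_le_ofReal
    rw [tsum_mul_left, tsum_geometric_of_lt_one hq0 hq1]
    have hgeom : (2*(d:ℝ)+1)^r * Real.exp ((r:ℝ)*(M₁-M₀)) ≤ E := by
      rw [hpow_exp r, ← Real.exp_add, hE]
      apply Real.exp_le_exp.mpr
      have h0 : (0:ℝ) ≤ (r:ℝ) := Nat.cast_nonneg r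
      nlinarith [mul_nonneg h0 hM₁, mul_nonneg h0 hL0]
    calc (2*(d:ℝ)+1)^(r+1) * Real.exp ((r:ℝ)*(M₁-M₀)) * (1-q)⁻¹
        = (2*(d:ℝ)+1)/(1-q) * ((2*(d:ℝ)+1)^r * Real.exp ((r:ℝ)*(M₁-M₀))) := by
          rw [pow_succ]
          field_simp
      _ ≤ (2*(d:ℝ)+1)/(1-q) * E := by
          apply mul_le_mul_of_nonneg_left hgeom
          positivity
  have hCn : ((2*d+1:ℕ):ENNReal)^N * ENNReal.ofReal (Real.exp ((N:ℝ)*M₁ - (r:ℝ)*M₀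
      - ((N-r:ℕ):ℝ)*β + (M₀+M₁)*((l1 y:ℝ)+1))) ≤ ENNReal.ofReal E := by
    have hc : ((2*d+1:ℕ):ENNReal) = ENNReal.ofReal (2*(d:ℝ)+1) := by
      rw [← ENNReal.ofReal_natCast]
      congr 1
      push_cast
      ring
    rw [hc, ← ENNReal.ofReal_pow hd0, ← ENNReal.ofReal_mul (by positivity)]
    apply ENNReal.ofReal_le_ofReal
    rw [hpow_exp N, ← Real.exp_add, hE]
    apply Real.exp_le_exp.mpr
    have hNr : ((N-r:ℕ):ℝ) = (N:ℝ) - (r:ℝ) := by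
      push_cast [Nat.cast_sub (le_of_lt hrNn)]
      ring
    rw [hNr, hβ]
    have h0 : (0:ℝ) ≤ (r:ℝ) := Nat.cast_nonneg r
    have hN2' : (M₀+M₁) * ((l1 y : ℝ)+1) ≤ lam * ((N:ℝ) - (r:ℝ)) := hN2
    nlinarith [mul_nonneg h0 hM₁, mul_nonneg h0 hL0]
  -- ### putting the ENNReal bound together
  have hcore : (∑' x : {x : X d // r < nm x}, Zenn V ω m₁ m₂ x.1 y)
      ≤ ENNReal.ofReal (((2*(d:ℝ)+1)/(1-q) + 1) * E) * Zenn0 := by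
    have hsig : (∑' x : {x : X d // r < nm x}, Zenn V ω m₁ m₂ x.1 y)
        = ∑' s : SIG d r m₁ m₂ y, w s := by
      rw [ENNReal.tsum_sigma' w]
      rfl
    rw [hsig]
    have hsplit : ∀ s : SIG d r m₁ m₂ y, w s = (if M s then w s else 0) + (if M s then 0 else w s) := by
      intro s
      by_cases h : M s
      · rw [if_pos h, if_pos h, add_zero]
      · rw [if_neg h, if_neg h, zero_add]
    calc (∑' s : SIG d r m₁ m₂ y, w s)
        = ∑' s : SIG d r m₁ m₂ y, ((if M s then w s else 0) + (if M s then 0 else w s)) :=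
          tsum_congr hsplit
      _ = (∑' s : SIG d r m₁ m₂ y, if M s then w s else 0)
          + (∑' s : SIG d r m₁ m₂ y, if M s then 0 else w s) := ENNReal.tsum_add
      _ ≤ (∑' j : ℕ, ((2*d+1:ℕ):ENNReal)^(r+1+j) * ENNReal.ofReal (A j)) * Zenn0
          + ((2*d+1:ℕ):ENNReal)^N * (ENNReal.ofReal (Real.exp ((N:ℝ)*M₁ - (r:ℝ)*M₀
            - ((N-r:ℕ):ℝ)*β + (M₀+M₁)*((l1 y:ℝ)+1))) * Zenn0) :=
          add_le_add hmerge hnomerge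
      _ ≤ ENNReal.ofReal ((2*(d:ℝ)+1)/(1-q) * E) * Zenn0 + ENNReal.ofReal E * Zenn0 := by
          apply add_le_add
          · exact mul_le_mul_left hCm _
          · rw [← mul_assoc]
            exact mul_le_mul_left hCn _
      _ = ENNReal.ofReal (((2*(d:ℝ)+1)/(1-q) + 1) * E) * Zenn0 := by
          rw [← add_mul]
          congr 1
          rw [← ENNReal.ofReal_add (by positivity) hE0]
          congr 1
          ring
  -- ### back to the reals
  have hZnn : ∀ a b : X d, 0 ≤ Z V ω m₁ m₂ a b :=
    fun a b => tsum_nonneg (fun γ => (Real.exp_pos _).le)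
  have hC0 : 0 ≤ ((2*(d:ℝ)+1)/(1-q) + 1) * E := by positivity
  have hfinal : (∑' x : {x : X d // r < nm x}, Z V ω m₁ m₂ x.1 y)
      ≤ (((2*(d:ℝ)+1)/(1-q) + 1) * E) * Z V ω m₁ m₂ 0 y := by
    have h1 : (∑' x : {x : X d // r < nm x}, Z V ω m₁ m₂ x.1 y)
        = (∑' x : {x : X d // r < nm x}, Zenn V ω m₁ m₂ x.1 y).toReal := by
      rw [ENNReal.tsum_toReal_eq (fun x => by rw [Zenn_eq]; exact ENNReal.ofReal_ne_top)]
      apply tsum_congr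
      intro x
      rw [Zenn_eq, ENNReal.toReal_ofReal (hZnn _ _)]
    rw [h1]
    apply ENNReal.toReal_le_of_le_ofReal (mul_nonneg hC0 (hZnn 0 y))
    calc (∑' x : {x : X d // r < nm x}, Zenn V ω m₁ m₂ x.1 y)
        ≤ ENNReal.ofReal (((2*(d:ℝ)+1)/(1-q) + 1) * E) * Zenn0 := hcore
      _ = ENNReal.ofReal ((((2*(d:ℝ)+1)/(1-q) + 1) * E) * Z V ω m₁ m₂ 0 y) := by
          rw [hZ0, Zenn_eq, ← ENNReal.ofReal_mul hC0]
  calc (∑' x : {x : X d // r < nm x}, Z V ω m₁ m₂ x.1 y)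
      ≤ (((2*(d:ℝ)+1)/(1-q) + 1) * E) * Z V ω m₁ m₂ 0 y := hfinal
    _ = ((2*(d:ℝ)+1)/(1-Real.exp (-lam)) + 1) *
        Real.exp (-2*((M₀-3*M₁)/2 - Real.log (2*(d:ℝ)+1))*(r:ℝ)) * Z V ω m₁ m₂ 0 y := by
        rw [hq, hE, hLdef]

/-- Lemma 5.2 (influx estimate). -/
theorem statement8
    (d : ℕ) (hd : 1 ≤ d) (M₀ M₁ : ℝ) (hM₀ : 0 ≤ M₀) (hM₁ : 0 ≤ M₁)
    (hl0 : 0 < (M₀ - 3 * M₁) / 2 - Real.log (2 * (d : ℝ) + 1))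
    (lam : ℝ) (hlam : 0 < lam)
    (hlam' : lam < (M₀ - 3 * M₁) / 2 - Real.log (2 * (d : ℝ) + 1)) :
    ∃ K₇ : ℝ, 0 < K₇ ∧ ∀ r : ℕ, ∃ S : ℕ,
      ∀ (V : X d → ℝ), V 0 = M₀ → (∀ x : X d, x ≠ 0 → |V x| ≤ M₁) →
      ∀ (ω : ℤ → Bool) (m₁ m₂ : ℤ),
        Good d M₀ M₁ lam r m₁ m₂ ω → (S : ℤ) < m₂ - m₁ →
        ∀ y : X d, nm y ≤ r →
          (∑' x : {x : X d // r < nm x}, Z V ω m₁ m₂ x.1 y) ≤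
            K₇ * Real.exp (-2 * ((M₀ - 3 * M₁) / 2 - Real.log (2 * (d : ℝ) + 1)) * r) *
              Z V ω m₁ m₂ 0 y := by
  have hd1 : (1:ℝ) ≤ 2*(d:ℝ)+1 := by
    have : (0:ℝ) ≤ (d:ℝ) := Nat.cast_nonneg d
    linarith
  have hq1 : Real.exp (-lam) < 1 := Real.exp_lt_one_iff.mpr (by linarith)
  have h1q : (0:ℝ) < 1 - Real.exp (-lam) := by linarith
  refine ⟨(2*(d:ℝ)+1)/(1-Real.exp (-lam)) + 1, ?_, ?_⟩
  · have h0 : (0:ℝ) ≤ (2*(d:ℝ)+1)/(1-Real.exp (-lam)) :=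
      div_nonneg (by linarith) h1q.le
    linarith
  intro r
  set C : ℕ := Nat.ceil ((M₀+M₁) * ((d:ℝ)*(r:ℝ)+1) / lam) with hC
  refine ⟨r + d*r + 2 + C, ?_⟩
  intro V hV0 hV1 ω m₁ m₂ hG hS y hy
  have hLy : l1 y ≤ d * r := le_trans (l1_le_d_mul_nm y) (Nat.mul_le_mul_left d hy)
  have hNc : ((m₂ - m₁).toNat : ℤ) = m₂ - m₁ := Int.toNat_of_nonneg (by have := hG.1; omega)
  have hS' : ((r + d*r + 2 + C : ℕ) : ℤ) < m₂ - m₁ := hS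
  have hN1 : (r:ℤ) + (l1 y : ℤ) + 2 ≤ m₂ - m₁ := by
    have h1 : (l1 y : ℤ) ≤ (d:ℤ) * (r:ℤ) := by exact_mod_cast hLy
    push_cast at hS'
    omega
  have hN2 : (M₀+M₁) * ((l1 y : ℝ)+1) ≤ lam * (((m₂ - m₁).toNat : ℝ) - (r:ℝ)) := by
    have hCle : (M₀+M₁) * ((d:ℝ)*(r:ℝ)+1) ≤ lam * (C:ℝ) := by
      have h := Nat.le_ceil ((M₀+M₁) * ((d:ℝ)*(r:ℝ)+1) / lam)
      rw [div_le_iff₀ hlam] at h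
      rw [← hC] at h
      linarith
    have hNr : (C:ℝ) ≤ ((m₂ - m₁).toNat : ℝ) - (r:ℝ) := by
      have h2 : ((r + d*r + 2 + C : ℕ) : ℤ) < ((m₂ - m₁).toNat : ℤ) := by omega
      have h3 : (r:ℤ) + (C:ℤ) ≤ ((m₂ - m₁).toNat : ℤ) := by push_cast at h2 ⊢; omega
      have h4 : ((r:ℝ)) + (C:ℝ) ≤ ((m₂ - m₁).toNat : ℝ) := by exact_mod_cast h3
      linarith
    have hLyR : (l1 y : ℝ) ≤ (d:ℝ)*(r:ℝ) := by exact_mod_cast hLy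
    calc (M₀+M₁) * ((l1 y : ℝ)+1) ≤ (M₀+M₁) * ((d:ℝ)*(r:ℝ)+1) := by
          apply mul_le_mul_of_nonneg_left (by linarith) (by linarith)
      _ ≤ lam * (C:ℝ) := hCle
      _ ≤ lam * (((m₂ - m₁).toNat : ℝ) - (r:ℝ)) :=
          mul_le_mul_of_nonneg_left hNr hlam.le
  exact main_bound hd hM₀ hM₁ hlam hV0 hV1 hG hy hN1 hN2

end BKpaper
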